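/- Let λ_i^σ = max_{τ∈A(i,σ)} ρ_i(σ,τ)μ(σ)/μ(τ), b_i^τ = |{σ ∈ f_i : τ ∈ A(i,σ)}|, b_i = max_τ b_i^τ, γ_i = b_i·max_{σ∈f_i} λ_i^σ, and ξ = max_{σ∈Ω} θ(σ)/μ(σ). Then for any fixed flaw sequence w_1,...,w_t, the probability that the walk started from θ addresses exactly w_1,...,w_t in its first t steps is at most ξ·Π_{i=1}^t γ_{w_i}. -/
import Mathlib


open Classical in
theorem stmt_16_aux {Ω ι : Type*} [Fintype Ω] [DecidableEq Ω]
    (μ : Ω → ℝ) (hμpos : ∀ σ, 0 < μ σ) (hμ1 : ∑ σ, μ σ = 1)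
    (f : ι → Finset Ω) (A : ι → Ω → Finset Ω)
    (ρ : ι → Ω → Ω → ℝ) (hρ0 : ∀ i σ τ, 0 ≤ ρ i σ τ)
    (hρsupp : ∀ i, ∀ σ ∈ f i, ∀ τ, τ ∉ A i σ → ρ i σ τ = 0)
    (lam : ι → Ω → ℝ)
    (hlam : ∀ i, ∀ σ ∈ f i,
      IsGreatest {x : ℝ | ∃ τ ∈ A i σ, x = ρ i σ τ * μ σ / μ τ} (lam i σ))
    (b : ι → ℕ)
    (hb : ∀ i, IsGreatest {n : ℕ | ∃ τ : Ω, n = ((f i).filter fun σ => τ ∈ A i σ).card} (b i))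
    (γ : ι → ℝ)
    (hγ : ∀ i, IsGreatest {x : ℝ | ∃ σ ∈ f i, x = (b i : ℝ) * lam i σ} (γ i)) :
    ∀ (t : ℕ) (W : Fin t → ι) (ν : Ω → ℝ) (c : ℝ), 0 ≤ c →
      (∀ σ, 0 ≤ ν σ) → (∀ σ, ν σ ≤ c * μ σ) →
      (∑ traj : Fin (t + 1) → Ω,
        if (∀ k : Fin t, traj k.castSucc ∈ f (W k)) then
          ν (traj 0) * ∏ k : Fin t, ρ (W k) (traj k.castSucc) (traj k.succ)
        else 0)
      ≤ c * ∏ k : Fin t, γ (W k) := by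
  have hlam0 : ∀ i, ∀ σ ∈ f i, 0 ≤ lam i σ := by
    intro i σ hσ
    obtain ⟨τ, hτ, heq⟩ := (hlam i σ hσ).1
    rw [heq]
    exact div_nonneg (mul_nonneg (hρ0 i σ τ) (hμpos σ).le) (hμpos τ).le
  have hγ0 : ∀ i, 0 ≤ γ i := by
    intro i
    obtain ⟨σ, hσ, heq⟩ := (hγ i).1
    rw [heq]
    exact mul_nonneg (Nat.cast_nonneg _) (hlam0 i σ hσ)
  intro t
  induction t with
  | zero =>
    intro W ν c hc hν0 hνc
    simp only [IsEmpty.forall_iff, if_true, Finset.univ_eq_empty, Finset.prod_empty,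
      mul_one]
    calc (∑ traj : Fin 1 → Ω, ν (traj 0))
        = ∑ σ : Ω, ν σ := (Fintype.sum_equiv (Equiv.funUnique (Fin 1) Ω) _ _ (fun _ => rfl))
      _ ≤ ∑ σ : Ω, c * μ σ := Finset.sum_le_sum fun σ _ => hνc σ
      _ = c := by rw [← Finset.mul_sum, hμ1, mul_one]
  | succ t ih =>
    intro W ν c hc hν0 hνc
    set i0 := W 0 with hi0
    set ν' : Ω → ℝ := fun τ => ∑ σ₀, if σ₀ ∈ f i0 then ν σ₀ * ρ i0 σ₀ τ else 0 with hν'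
    have hν'0 : ∀ τ, 0 ≤ ν' τ := by
      intro τ
      refine Finset.sum_nonneg fun σ₀ _ => ?_
      split
      · exact mul_nonneg (hν0 σ₀) (hρ0 _ _ _)
      · exact le_rfl
    have hν'c : ∀ τ, ν' τ ≤ (c * γ i0) * μ τ := by
      intro τ
      have hsum : ∑ σ₀ ∈ (f i0).filter (fun σ => τ ∈ A i0 σ), lam i0 σ₀ ≤ γ i0 := by
        have hcard : ((f i0).filter (fun σ => τ ∈ A i0 σ)).card ≤ b i0 := (hb i0).2 ⟨τ, rfl⟩
        rcases Nat.eq_zero_or_pos (b i0) with hb0 | hbpos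
        · have he : ((f i0).filter (fun σ => τ ∈ A i0 σ)) = ∅ :=
            Finset.card_eq_zero.mp (le_antisymm (hb0 ▸ hcard) (Nat.zero_le _))
          rw [he, Finset.sum_empty]
          exact hγ0 i0
        · have hbpos' : (0 : ℝ) < (b i0 : ℝ) := by exact_mod_cast hbpos
          have hdiv : (0:ℝ) ≤ γ i0 / b i0 := div_nonneg (hγ0 i0) hbpos'.le
          calc ∑ σ₀ ∈ (f i0).filter (fun σ => τ ∈ A i0 σ), lam i0 σ₀
              ≤ ((f i0).filter (fun σ => τ ∈ A i0 σ)).card • (γ i0 / b i0) := by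
                refine Finset.sum_le_card_nsmul _ _ _ fun σ₀ hσ₀ => ?_
                have hσf : σ₀ ∈ f i0 := (Finset.mem_filter.mp hσ₀).1
                have := (hγ i0).2 ⟨σ₀, hσf, rfl⟩
                rw [le_div_iff₀ hbpos']
                linarith
            _ = (((f i0).filter (fun σ => τ ∈ A i0 σ)).card : ℝ) * (γ i0 / b i0) := by
                rw [nsmul_eq_mul]
            _ ≤ (b i0 : ℝ) * (γ i0 / b i0) :=
                mul_le_mul_of_nonneg_right (by exact_mod_cast hcard) hdiv
            _ = γ i0 := by field_simp
      calc ν' τ ≤ ∑ σ₀ : Ω, (if σ₀ ∈ (f i0).filter (fun σ => τ ∈ A i0 σ)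
              then c * lam i0 σ₀ * μ τ else 0) := by
            refine Finset.sum_le_sum fun σ₀ _ => ?_
            by_cases hf : σ₀ ∈ f i0
            · by_cases hτA : τ ∈ A i0 σ₀
              · simp only [hf, hτA, if_true, Finset.mem_filter, and_true, and_self]
                have hρle : ρ i0 σ₀ τ * μ σ₀ / μ τ ≤ lam i0 σ₀ :=
                  (hlam i0 σ₀ hf).2 ⟨τ, hτA, rfl⟩
                have h1 : ρ i0 σ₀ τ * μ σ₀ = (ρ i0 σ₀ τ * μ σ₀ / μ τ) * μ τ :=
                  (div_mul_cancel₀ _ (hμpos τ).ne').symm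
                calc ν σ₀ * ρ i0 σ₀ τ ≤ c * μ σ₀ * ρ i0 σ₀ τ :=
                      mul_le_mul_of_nonneg_right (hνc σ₀) (hρ0 _ _ _)
                  _ = c * ((ρ i0 σ₀ τ * μ σ₀ / μ τ) * μ τ) := by rw [← h1]; ring
                  _ ≤ c * (lam i0 σ₀ * μ τ) :=
                      mul_le_mul_of_nonneg_left
                        (mul_le_mul_of_nonneg_right hρle (hμpos τ).le) hc
                  _ = c * lam i0 σ₀ * μ τ := by ring
              · simp [hρsupp i0 σ₀ hf τ hτA, hτA]
            · simp [hf]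
        _ = ∑ σ₀ ∈ (f i0).filter (fun σ => τ ∈ A i0 σ), c * lam i0 σ₀ * μ τ := by
            rw [Finset.sum_ite_mem, Finset.univ_inter]
        _ = (∑ σ₀ ∈ (f i0).filter (fun σ => τ ∈ A i0 σ), lam i0 σ₀) * (c * μ τ) := by
            rw [Finset.sum_mul]
            exact Finset.sum_congr rfl fun σ₀ _ => by ring
        _ ≤ γ i0 * (c * μ τ) :=
            mul_le_mul_of_nonneg_right hsum (mul_nonneg hc (hμpos τ).le)
        _ = (c * γ i0) * μ τ := by ring
    have hrw : (∑ traj : Fin (t + 1 + 1) → Ω,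
        if (∀ k : Fin (t + 1), traj k.castSucc ∈ f (W k)) then
          ν (traj 0) * ∏ k : Fin (t + 1), ρ (W k) (traj k.castSucc) (traj k.succ)
        else 0)
      = ∑ rest : Fin (t + 1) → Ω,
          if (∀ k : Fin t, rest k.castSucc ∈ f (W k.succ)) then
            ν' (rest 0) * ∏ k : Fin t, ρ (W k.succ) (rest k.castSucc) (rest k.succ)
          else 0 := by
      rw [← (Fin.consEquiv (fun _ : Fin (t + 1 + 1) => Ω)).sum_comp]
      rw [Fintype.sum_prod_type, Finset.sum_comm]
      refine Finset.sum_congr rfl fun rest _ => ?_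
      simp only [Fin.consEquiv_apply, Fin.forall_fin_succ, Fin.prod_univ_succ,
        ← Fin.succ_castSucc, Fin.castSucc_zero, Fin.cons_zero, Fin.cons_succ]
      by_cases hC : ∀ k : Fin t, rest k.castSucc ∈ f (W k.succ)
      · simp only [hC, implies_true, and_true, if_true]
        simp only [hν']
        rw [Finset.sum_mul]
        refine Finset.sum_congr rfl fun σ₀ _ => ?_
        split
        · ring
        · rw [zero_mul]
      · simp [hC]
    rw [hrw]
    calc (∑ rest : Fin (t + 1) → Ω,
          if (∀ k : Fin t, rest k.castSucc ∈ f (W k.succ)) then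
            ν' (rest 0) * ∏ k : Fin t, ρ (W k.succ) (rest k.castSucc) (rest k.succ)
          else 0)
        ≤ (c * γ i0) * ∏ k : Fin t, γ (W k.succ) :=
          ih (fun k => W k.succ) ν' (c * γ i0) (mul_nonneg hc (hγ0 i0)) hν'0 hν'c
      _ = c * ∏ k : Fin (t + 1), γ (W k) := by rw [Fin.prod_univ_succ]; ring

open Classical in
/-- With `λ_i^σ = max_{τ∈A(i,σ)} ρ_i(σ,τ)μ(σ)/μ(τ)`, `b_i = max_τ |{σ ∈ f_i : τ ∈ A(i,σ)}|`,
`γ_i = b_i · max_{σ∈f_i} λ_i^σ` and `ξ = max_σ θ(σ)/μ(σ)`: for any fixed flaw sequence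
`w_1,…,w_t`, the probability that the walk started from `θ` addresses exactly
`w_1,…,w_t` in its first `t` steps is at most `ξ ∏_k γ_{w_k}`. -/
theorem stmt_16 {Ω ι : Type*} [Fintype Ω] [DecidableEq Ω]
    (μ : Ω → ℝ) (hμpos : ∀ σ, 0 < μ σ) (hμ1 : ∑ σ, μ σ = 1)
    (θ : Ω → ℝ) (hθ0 : ∀ σ, 0 ≤ θ σ) (hθ1 : ∑ σ, θ σ = 1)
    (ξ : ℝ) (hξ : IsGreatest {x : ℝ | ∃ σ : Ω, x = θ σ / μ σ} ξ)
    (f : ι → Finset Ω) (A : ι → Ω → Finset Ω) (hA : ∀ i, ∀ σ ∈ f i, (A i σ).Nonempty)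
    (ρ : ι → Ω → Ω → ℝ)
    (hρ0 : ∀ i σ τ, 0 ≤ ρ i σ τ)
    (hρsupp : ∀ i, ∀ σ ∈ f i, ∀ τ, τ ∉ A i σ → ρ i σ τ = 0)
    (hρsum : ∀ i, ∀ σ ∈ f i, ∑ τ, ρ i σ τ = 1)
    (lam : ι → Ω → ℝ)
    (hlam : ∀ i, ∀ σ ∈ f i,
      IsGreatest {x : ℝ | ∃ τ ∈ A i σ, x = ρ i σ τ * μ σ / μ τ} (lam i σ))
    (b : ι → ℕ)
    (hb : ∀ i, IsGreatest {n : ℕ | ∃ τ : Ω, n = ((f i).filter fun σ => τ ∈ A i σ).card} (b i))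
    (γ : ι → ℝ)
    (hγ : ∀ i, IsGreatest {x : ℝ | ∃ σ ∈ f i, x = (b i : ℝ) * lam i σ} (γ i))
    (choice : List Ω → ι) (t : ℕ) (W : Fin t → ι) :
    (∑ traj : Fin (t + 1) → Ω,
        if (∀ k : Fin t, traj k.castSucc ∈ f (W k) ∧
            choice (List.ofFn fun j : Fin (k.val + 1) =>
              traj (Fin.castLE (Nat.succ_le_succ k.isLt.le) j)) = W k) then
          θ (traj 0) * ∏ k : Fin t, ρ (W k) (traj k.castSucc) (traj k.succ)
        else 0)
      ≤ ξ * ∏ k : Fin t, γ (W k) := by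
  have hξ0 : 0 ≤ ξ := by
    obtain ⟨σ, hσ⟩ := hξ.1
    rw [hσ]
    exact div_nonneg (hθ0 σ) (hμpos σ).le
  have hθξ : ∀ σ, θ σ ≤ ξ * μ σ := by
    intro σ
    have := hξ.2 ⟨σ, rfl⟩
    rw [div_le_iff₀ (hμpos σ)] at this
    linarith
  refine le_trans (Finset.sum_le_sum fun traj _ => ?_)
    (stmt_16_aux μ hμpos hμ1 f A ρ hρ0 hρsupp lam hlam b hb γ hγ t W θ ξ hξ0 hθ0 hθξ)
  by_cases h : ∀ k : Fin t, traj k.castSucc ∈ f (W k) ∧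
      choice (List.ofFn fun j : Fin (k.val + 1) =>
        traj (Fin.castLE (Nat.succ_le_succ k.isLt.le) j)) = W k
  · rw [if_pos h, if_pos fun k => (h k).1]
  · rw [if_neg h]
    split
    · exact mul_nonneg (hθ0 _) (Finset.prod_nonneg fun k _ => hρ0 _ _ _)
    · exact le_rfl
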